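/- Let n = bm with b even and m odd, let r ≥ 0 and let k be odd with k·m²·r·(r−1) < n. If L is a latin square of order n satisfying ⌊L[i][j]/m⌋ ≡ ⌊i/m⌋ + ⌊j/m⌋ (mod b) for all j and all i with 0 ≤ i < n − mr, then L has no k-plex. -/

import Mathlib

open scoped Classical

/-- A latin square of order `n`: each symbol occurs exactly once in each row and column. -/
def IsLatinSquare {n : ℕ} (L : Fin n → Fin n → Fin n) : Prop :=
  (∀ i, Function.Bijective fun j => L i j) ∧ (∀ j, Function.Bijective fun i => L i j)

/-- A `k`-plex of `L`: a set of cells with exactly `k` in each row, `k` in each column,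
and each symbol occurring exactly `k` times. -/
def IsPlex {n : ℕ} (L : Fin n → Fin n → Fin n) (k : ℕ) (K : Finset (Fin n × Fin n)) : Prop :=
  (∀ i, (K.filter fun p => p.1 = i).card = k) ∧
  (∀ j, (K.filter fun p => p.2 = j).card = k) ∧
  (∀ s, (K.filter fun p => L p.1 p.2 = s).card = k)

/-- `L` has a transversal, i.e. a `1`-plex. -/
def HasTransversal {n : ℕ} (L : Fin n → Fin n → Fin n) : Prop :=
  ∃ K, IsPlex L 1 K


lemma aux_filter_card (b m v : ℕ) (hm : 0 < m) (hv : v < b) :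
    ((Finset.range (b * m)).filter (fun s => s / m = v)).card = m := by
  have he : (Finset.range (b * m)).filter (fun s => s / m = v)
      = (Finset.range m).image (fun x => v * m + x) := by
    ext s
    simp only [Finset.mem_filter, Finset.mem_range, Finset.mem_image]
    constructor
    · rintro ⟨hs, rfl⟩
      exact ⟨s % m, Nat.mod_lt _ hm, by
        have h1 := Nat.div_add_mod s m
        have h2 : s / m * m = m * (s / m) := mul_comm _ _
        omega⟩
    · rintro ⟨x, hx, rfl⟩
      refine ⟨?_, ?_⟩
      · calc v * m + x < (v + 1) * m := by nlinarith
          _ ≤ b * m := Nat.mul_le_mul_right _ hv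
      · rw [mul_comm v m, Nat.mul_add_div hm, Nat.div_eq_of_lt hx, Nat.add_zero]
  rw [he, Finset.card_image_of_injective _ (fun a b h => by omega), Finset.card_range]

lemma aux_fin_fiber_card (b m n : ℕ) (hn : n = b * m) (hm : 0 < m) (v : ℕ) (hv : v < b) :
    (Finset.univ.filter (fun s : Fin n => (s : ℕ) / m = v)).card = m := by
  rw [Finset.card_filter, Fin.sum_univ_eq_sum_range (fun s => if s / m = v then 1 else 0),
    ← Finset.card_filter, hn]
  exact aux_filter_card b m v hm hv

lemma aux_sum_div (b m : ℕ) (hm : 0 < m) :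
    ∑ s ∈ Finset.range (b * m), s / m = m * ∑ u ∈ Finset.range b, u := by
  rw [← Finset.sum_fiberwise_of_maps_to (g := fun s => s / m) (t := Finset.range b)
    (fun s hs => Finset.mem_range.mpr ((Nat.div_lt_iff_lt_mul hm).mpr (Finset.mem_range.mp hs)))
    (fun s => s / m), Finset.mul_sum]
  refine Finset.sum_congr rfl fun u hu => ?_
  calc ∑ s ∈ (Finset.range (b * m)).filter (fun s => s / m = u), s / m
      = ∑ s ∈ (Finset.range (b * m)).filter (fun s => s / m = u), u :=
        Finset.sum_congr rfl fun s hs => (Finset.mem_filter.mp hs).2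
    _ = m * u := by
        rw [Finset.sum_const, aux_filter_card b m u hm (Finset.mem_range.mp hu), smul_eq_mul]

lemma aux_sum_fiber {α β M : Type*} [AddCommMonoid M] [Fintype β] [DecidableEq β]
    (K : Finset α) (g : α → β) (k : ℕ) (h : ∀ y, (K.filter fun p => g p = y).card = k)
    (f : β → M) : ∑ p ∈ K, f (g p) = ∑ y, k • f y := by
  rw [← Finset.sum_fiberwise_of_maps_to (fun x _ => Finset.mem_univ (g x)) (fun p => f (g p))]
  refine Finset.sum_congr rfl fun y _ => ?_
  calc ∑ p ∈ K.filter (fun p => g p = y), f (g p)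
      = ∑ p ∈ K.filter (fun p => g p = y), f y :=
        Finset.sum_congr rfl fun p hp => by rw [(Finset.mem_filter.mp hp).2]
    _ = k • f y := by rw [Finset.sum_const, h]

lemma aux_band (b m r : ℕ) (hm : 0 < m) (hr : r ≤ b) :
    2 * ∑ i ∈ (Finset.range (b * m)).filter (fun i => ¬ i < m * (b - r)), (b - i / m)
      = m * (r * (r + 1)) := by
  have hmaps : ∀ i ∈ (Finset.range (b * m)).filter (fun i => ¬ i < m * (b - r)),
      i / m ∈ (Finset.range b).filter (fun u => b - r ≤ u) := by
    intro i hi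
    obtain ⟨hi1, hi2⟩ := Finset.mem_filter.mp hi
    refine Finset.mem_filter.mpr ⟨Finset.mem_range.mpr
      ((Nat.div_lt_iff_lt_mul hm).mpr (Finset.mem_range.mp hi1)), ?_⟩
    rw [Nat.le_div_iff_mul_le hm]
    have hco : m * (b - r) = (b - r) * m := mul_comm _ _
    omega
  rw [← Finset.sum_fiberwise_of_maps_to hmaps (fun i => b - i / m)]
  have hinner : ∀ u ∈ (Finset.range b).filter (fun u => b - r ≤ u),
      ∑ i ∈ ((Finset.range (b * m)).filter (fun i => ¬ i < m * (b - r))).filter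
        (fun i => i / m = u), (b - i / m) = m * (b - u) := by
    intro u hu
    obtain ⟨hu1, hu2⟩ := Finset.mem_filter.mp hu
    have hfe : ((Finset.range (b * m)).filter (fun i => ¬ i < m * (b - r))).filter
        (fun i => i / m = u) = (Finset.range (b * m)).filter (fun i => i / m = u) := by
      ext i
      simp only [Finset.mem_filter, Finset.mem_range]
      constructor
      · tauto
      · rintro ⟨h1, h2⟩
        refine ⟨⟨h1, ?_⟩, h2⟩
        have : u * m ≤ i := h2 ▸ Nat.div_mul_le_self i m
        have : (b - r) * m ≤ u * m := Nat.mul_le_mul_right _ hu2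
        have hco : m * (b - r) = (b - r) * m := mul_comm _ _
        omega
    rw [hfe]
    calc ∑ i ∈ (Finset.range (b * m)).filter (fun i => i / m = u), (b - i / m)
        = ∑ i ∈ (Finset.range (b * m)).filter (fun i => i / m = u), (b - u) :=
          Finset.sum_congr rfl fun i hi => by rw [(Finset.mem_filter.mp hi).2]
      _ = m * (b - u) := by
          rw [Finset.sum_const, aux_filter_card b m u hm (Finset.mem_range.mp hu1), smul_eq_mul]
  rw [Finset.sum_congr rfl hinner]
  have hU : (Finset.range b).filter (fun u => b - r ≤ u)
      = (Finset.range r).image (fun x => b - r + x) := by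
    ext u
    simp only [Finset.mem_filter, Finset.mem_range, Finset.mem_image]
    constructor
    · rintro ⟨h1, h2⟩; exact ⟨u - (b - r), by omega, by omega⟩
    · rintro ⟨x, hx, rfl⟩; omega
  rw [hU, Finset.sum_image (fun x _ y _ h => by omega)]
  have : ∀ x ∈ Finset.range r, m * (b - (b - r + x)) = m * (r - x) := by
    intro x hx
    rw [Finset.mem_range] at hx
    congr 1
    omega
  rw [Finset.sum_congr rfl this, ← Finset.mul_sum]
  have h2 : ∑ x ∈ Finset.range r, (r - x) = ∑ x ∈ Finset.range r, (x + 1) := by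
    rw [← Finset.sum_range_reflect (fun x => x + 1) r]
    refine Finset.sum_congr rfl fun x hx => ?_
    rw [Finset.mem_range] at hx
    omega
  rw [h2, Finset.sum_add_distrib, Finset.sum_const, Finset.card_range, smul_eq_mul, mul_one]
  have h3 := Finset.sum_range_id_mul_two r
  calc 2 * (m * (∑ x ∈ Finset.range r, x + r))
      = m * ((∑ x ∈ Finset.range r, x) * 2 + 2 * r) := by ring
    _ = m * (r * (r - 1) + 2 * r) := by rw [h3]
    _ = m * (r * (r + 1)) := by
        congr 1
        cases r with
        | zero => rfl
        | succ q =>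
          have h4 : q + 1 - 1 = q := rfl
          rw [h4]; ring

lemma aux_col (b m n r : ℕ) [NeZero b] (hn : n = b * m) (hm : 0 < m) (hr : r ≤ b)
    (L : Fin n → Fin n → Fin n) (j : Fin n) (hinj : Function.Injective (fun i => L i j))
    (hstep : ∀ i : Fin n, (i : ℕ) < n - m * r →
      (L i j : ℕ) / m ≡ (i : ℕ) / m + (j : ℕ) / m [MOD b])
    (i : Fin n) (hi : ¬ ((i : ℕ) < n - m * r)) :
    ∃ t, 1 ≤ t ∧ t ≤ r ∧
      (((L i j : ℕ) / m + t : ℕ) : ZMod b) = (((j : ℕ) / m : ℕ) : ZMod b) := by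
  have hb0 : 0 < b := Nat.pos_of_ne_zero (NeZero.ne b)
  have hn' : n - m * r = m * (b - r) := by
    have h1 : m * (b - r) + m * r = m * b := by rw [← Nat.mul_add]; congr 1; omega
    have h2 : m * b = b * m := mul_comm _ _
    omega
  set G : Finset (Fin n) := Finset.univ.filter (fun i : Fin n => (i : ℕ) < n - m * r) with hG
  set W : Finset (ZMod b) :=
    (Finset.range (b - r)).image (fun u => (((j : ℕ) / m + u : ℕ) : ZMod b)) with hW
  set A : Finset (Fin n) :=
    Finset.univ.filter (fun s : Fin n => ((((s : ℕ) / m : ℕ)) : ZMod b) ∈ W) with hA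
  have hWcard : W.card = b - r := by
    rw [hW, Finset.card_image_of_injOn, Finset.card_range]
    intro u1 h1 u2 h2 he
    rw [Finset.mem_coe, Finset.mem_range] at h1 h2
    have := (ZMod.natCast_eq_natCast_iff _ _ _).mp he
    have h3 := this.add_left_cancel' ((j : ℕ) / m)
    have h4 : u1 % b = u2 % b := h3
    rw [Nat.mod_eq_of_lt (by omega), Nat.mod_eq_of_lt (by omega)] at h4
    exact h4
  have hfib : ∀ w : ZMod b,
      (Finset.univ.filter (fun s : Fin n => ((((s : ℕ) / m : ℕ)) : ZMod b) = w)).card = m := by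
    intro w
    have hiff : ∀ s : Fin n, (((((s : ℕ) / m : ℕ)) : ZMod b) = w) ↔ (s : ℕ) / m = w.val := by
      intro s
      have hlt : (s : ℕ) / m < b := by
        rw [Nat.div_lt_iff_lt_mul hm]
        have := s.isLt
        omega
      constructor
      · intro h
        rw [← h, ZMod.val_cast_of_lt hlt]
      · intro h
        rw [h, ZMod.natCast_rightInverse w]
    rw [Finset.filter_congr (fun s _ => hiff s)]
    exact aux_fin_fiber_card b m n hn hm w.val (ZMod.val_lt w)
  have hAcard : A.card = (b - r) * m := by
    rw [hA, Finset.card_eq_sum_card_fiberwise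
      (f := fun s : Fin n => ((((s : ℕ) / m : ℕ)) : ZMod b)) (t := W)
      (s := Finset.univ.filter (fun s : Fin n => ((((s : ℕ) / m : ℕ)) : ZMod b) ∈ W))
      (fun s hs => (Finset.mem_filter.mp hs).2)]
    have hc : ∀ w ∈ W, (Finset.filter (fun a : Fin n => ((((a : ℕ) / m : ℕ)) : ZMod b) = w)
        (Finset.filter (fun s : Fin n => ((((s : ℕ) / m : ℕ)) : ZMod b) ∈ W) Finset.univ)).card
        = m := by
      intro w hw
      have he : Finset.filter (fun a : Fin n => ((((a : ℕ) / m : ℕ)) : ZMod b) = w)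
          (Finset.filter (fun s : Fin n => ((((s : ℕ) / m : ℕ)) : ZMod b) ∈ W) Finset.univ)
          = Finset.filter (fun s : Fin n => ((((s : ℕ) / m : ℕ)) : ZMod b) = w) Finset.univ := by
        ext s
        simp only [Finset.mem_filter, Finset.mem_univ, true_and]
        constructor
        · rintro ⟨h1, h2⟩; exact h2
        · intro h; exact ⟨h ▸ hw, h⟩
      rw [he]
      exact hfib w
    rw [Finset.sum_congr rfl hc, Finset.sum_const, hWcard, smul_eq_mul]
  have hGcard : G.card = m * (b - r) := by
    rw [hG, Finset.card_filter,
      Fin.sum_univ_eq_sum_range (fun i => if i < n - m * r then 1 else 0), ← Finset.card_filter]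
    have he : (Finset.range n).filter (fun i => i < n - m * r) = Finset.range (n - m * r) := by
      ext x
      simp only [Finset.mem_filter, Finset.mem_range]
      omega
    rw [he, Finset.card_range, hn']
  have himage : G.image (fun i => L i j) = A := by
    apply Finset.eq_of_subset_of_card_le
    · intro s hs
      obtain ⟨i', hi', rfl⟩ := Finset.mem_image.mp hs
      have hig : (i' : ℕ) < n - m * r := (Finset.mem_filter.mp hi').2
      refine Finset.mem_filter.mpr ⟨Finset.mem_univ _, ?_⟩
      refine Finset.mem_image.mpr ⟨(i' : ℕ) / m, ?_, ?_⟩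
      · rw [Finset.mem_range, Nat.div_lt_iff_lt_mul hm]
        have : m * (b - r) = (b - r) * m := mul_comm _ _
        omega
      · have h1 := hstep i' hig
        have h2 : ((j : ℕ) / m + (i' : ℕ) / m) ≡ (L i' j : ℕ) / m [MOD b] :=
          (Nat.add_comm ((i' : ℕ) / m) ((j : ℕ) / m) ▸ h1).symm
        exact (ZMod.natCast_eq_natCast_iff _ _ _).mpr h2
    · rw [Finset.card_image_of_injective G hinj, hGcard, hAcard, mul_comm]
  have hnotW : ((((L i j : ℕ) / m : ℕ)) : ZMod b) ∉ W := by
    intro hmem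
    have hmemA : L i j ∈ A := Finset.mem_filter.mpr ⟨Finset.mem_univ _, hmem⟩
    rw [← himage] at hmemA
    obtain ⟨i', hi', he⟩ := Finset.mem_image.mp hmemA
    have : i' = i := hinj he
    subst this
    exact hi (Finset.mem_filter.mp hi').2
  set w : ZMod b := ((((L i j : ℕ) / m : ℕ)) : ZMod b) - ((((j : ℕ) / m : ℕ)) : ZMod b) with hwdef
  have hwval : ¬ (w.val < b - r) := by
    intro hlt
    apply hnotW
    rw [hW]
    refine Finset.mem_image.mpr ⟨w.val, Finset.mem_range.mpr hlt, ?_⟩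
    push_cast
    rw [ZMod.natCast_rightInverse w, hwdef]
    ring
  refine ⟨b - w.val, ?_, ?_, ?_⟩
  · have := ZMod.val_lt w
    omega
  · omega
  · have hsum : w.val + (b - w.val) = b := by
      have := ZMod.val_lt w
      omega
    push_cast
    have : (((b : ℕ) - w.val : ℕ) : ZMod b) = (b : ZMod b) - (w.val : ZMod b) := by
      push_cast [Nat.cast_sub (le_of_lt (ZMod.val_lt w))]
      ring
    rw [this, ZMod.natCast_self, ZMod.natCast_rightInverse w, hwdef]
    ring

set_option maxHeartbeats 1000000 in
theorem stmt5 (b m n k r : ℕ) (hb : Even b) (hbpos : 0 < b) (hm : Odd m)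
    (hn : n = b * m) (hk : Odd k) (hkr : k * m ^ 2 * r * (r - 1) < n)
    (L : Fin n → Fin n → Fin n) (hL : IsLatinSquare L)
    (hstep : ∀ i j : Fin n, (i : ℕ) < n - m * r →
      (L i j : ℕ) / m ≡ (i : ℕ) / m + (j : ℕ) / m [MOD b]) :
    ¬ ∃ K, IsPlex L k K := by
  rintro ⟨K, hK1, hK2, hK3⟩
  have m0 : 0 < m := hm.pos
  have k0 : 0 < k := hk.pos
  obtain ⟨c, hcc⟩ := hb
  have hb2 : b = 2 * c := by omega
  have hc0 : 0 < c := by omega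
  haveI : NeZero b := ⟨by omega⟩
  have key : k * m * r * (r - 1) < b := by
    have h1 : k * m * r * (r - 1) * m < b * m := by
      calc k * m * r * (r - 1) * m = k * m ^ 2 * r * (r - 1) := by ring
        _ < n := hkr
        _ = b * m := hn
    exact Nat.lt_of_mul_lt_mul_right h1
  have hrb : r ≤ b := by
    rcases Nat.lt_or_ge r 2 with h | h
    · omega
    · have h1 : r * (r - 1) ≤ k * m * r * (r - 1) := by
        calc r * (r - 1) = 1 * 1 * r * (r - 1) := by ring
          _ ≤ k * m * r * (r - 1) := by
            apply Nat.mul_le_mul_right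
            apply Nat.mul_le_mul_right
            exact Nat.mul_le_mul k0 m0
      have h2 : r ≤ r * (r - 1) := Nat.le_mul_of_pos_right r (by omega)
      omega
  have hn' : n - m * r = m * (b - r) := by
    have h1 : m * (b - r) + m * r = m * b := by rw [← Nat.mul_add]; congr 1; omega
    have h2 : m * b = b * m := mul_comm _ _
    omega
  have hmrn : m * r ≤ n := by
    have h1 : m * r ≤ m * b := Nat.mul_le_mul_left _ hrb
    have h2 : m * b = b * m := mul_comm _ _
    omega
  have hdivlt : ∀ i : Fin n, (i : ℕ) / m < b := by
    intro i
    rw [Nat.div_lt_iff_lt_mul m0]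
    have := i.isLt
    omega
  have hbad' : ∀ i : Fin n, ¬ ((i : ℕ) < n - m * r) → b - r ≤ (i : ℕ) / m := by
    intro i hi
    rw [Nat.le_div_iff_mul_le m0]
    have hco : m * (b - r) = (b - r) * m := mul_comm _ _
    omega
  have hcol : ∀ p : Fin n × Fin n, ¬ ((p.1 : ℕ) < n - m * r) →
      ∃ t, 1 ≤ t ∧ t ≤ r ∧
        (((L p.1 p.2 : ℕ) / m + t : ℕ) : ZMod b) = (((p.2 : ℕ) / m : ℕ) : ZMod b) := by
    intro p hp
    exact aux_col b m n r hn m0 hrb L p.2 (hL.2 p.2).injective (fun i hi => hstep i p.2 hi) p.1 hp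
  set t : Fin n × Fin n → ℕ :=
    fun p => if h : ¬ ((p.1 : ℕ) < n - m * r) then (hcol p h).choose else 0 with htdef
  have ht : ∀ p : Fin n × Fin n, ¬ ((p.1 : ℕ) < n - m * r) → 1 ≤ t p ∧ t p ≤ r ∧
      (((L p.1 p.2 : ℕ) / m + t p : ℕ) : ZMod b) = (((p.2 : ℕ) / m : ℕ) : ZMod b) := by
    intro p h
    have : t p = (hcol p h).choose := by rw [htdef]; simp [h]
    rw [this]
    exact (hcol p h).choose_spec
  set Kbad : Finset (Fin n × Fin n) := K.filter (fun p => ¬ ((p.1 : ℕ) < n - m * r)) with hKbad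
  set blkF : Fin n → ZMod b := fun x => (((x : ℕ) / m : ℕ) : ZMod b) with hblkF
  set T' : ℕ := ∑ p ∈ Kbad, (b - (p.1 : ℕ) / m) with hT'
  set T : ℕ := ∑ p ∈ Kbad, t p with hT
  -- the total sum over K
  set Znat : ℕ := k * (m * ∑ u ∈ Finset.range b, u) with hZnat
  have hZ : ∑ y : Fin n, k • blkF y = (Znat : ZMod b) := by
    rw [← Finset.smul_sum]
    have h1 : ∑ y : Fin n, blkF y = ((∑ s ∈ Finset.range n, s / m : ℕ) : ZMod b) := by
      rw [Nat.cast_sum]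
      exact Fin.sum_univ_eq_sum_range (fun s => ((s / m : ℕ) : ZMod b)) n
    rw [h1, hn, aux_sum_div b m m0, hZnat]
    rw [nsmul_eq_mul]
    push_cast
    ring
  have hS1 : ∑ p ∈ K, blkF p.1 = (Znat : ZMod b) := by
    rw [aux_sum_fiber K (fun p => p.1) k hK1 blkF, hZ]
  have hS2 : ∑ p ∈ K, blkF p.2 = (Znat : ZMod b) := by
    rw [aux_sum_fiber K (fun p => p.2) k hK2 blkF, hZ]
  have hS3 : ∑ p ∈ K, blkF (L p.1 p.2) = (Znat : ZMod b) := by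
    rw [aux_sum_fiber K (fun p => L p.1 p.2) k hK3 blkF, hZ]
  have htotal : ∑ p ∈ K, (blkF (L p.1 p.2) - blkF p.1 - blkF p.2) = -(Znat : ZMod b) := by
    rw [Finset.sum_sub_distrib, Finset.sum_sub_distrib, hS1, hS2, hS3]
    ring
  -- good cells contribute zero
  have hgood : ∑ p ∈ K.filter (fun p => (p.1 : ℕ) < n - m * r),
      (blkF (L p.1 p.2) - blkF p.1 - blkF p.2) = 0 := by
    apply Finset.sum_eq_zero
    intro p hp
    have hg := (Finset.mem_filter.mp hp).2
    have h1 := hstep p.1 p.2 hg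
    have h2 : (((L p.1 p.2 : ℕ) / m : ℕ) : ZMod b) = (((p.1 : ℕ) / m + (p.2 : ℕ) / m : ℕ) : ZMod b) :=
      (ZMod.natCast_eq_natCast_iff _ _ _).mpr h1
    rw [hblkF]
    simp only []
    rw [h2]
    push_cast
    ring
  have hbadsum : ∑ p ∈ Kbad, (blkF (L p.1 p.2) - blkF p.1 - blkF p.2) = -(Znat : ZMod b) := by
    rw [← htotal, ← Finset.sum_filter_add_sum_filter_not K (fun p => (p.1 : ℕ) < n - m * r)
      (fun p => blkF (L p.1 p.2) - blkF p.1 - blkF p.2), hgood, zero_add]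
  -- bad cell terms
  have hbadterm : ∀ p ∈ Kbad, (blkF (L p.1 p.2) - blkF p.1 - blkF p.2)
      = (((b - (p.1 : ℕ) / m : ℕ)) : ZMod b) - ((t p : ℕ) : ZMod b) := by
    intro p hp
    have hpb := (Finset.mem_filter.mp hp).2
    obtain ⟨h1, h2, h3⟩ := ht p hpb
    have e1 : blkF (L p.1 p.2) = blkF p.2 - ((t p : ℕ) : ZMod b) := by
      have h4 := h3
      push_cast at h4
      rw [hblkF]
      simp only []
      linear_combination h4
    have e2 : blkF p.1 = -((((b - (p.1 : ℕ) / m : ℕ)) : ZMod b)) := by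
      have hplt := hdivlt p.1
      have hsum : (p.1 : ℕ) / m + (b - (p.1 : ℕ) / m) = b := by omega
      have h5 : ((((p.1 : ℕ) / m + (b - (p.1 : ℕ) / m) : ℕ)) : ZMod b) = ((b : ℕ) : ZMod b) := by
        rw [hsum]
      push_cast at h5
      rw [ZMod.natCast_self] at h5
      rw [hblkF]
      simp only []
      linear_combination h5
    rw [e1, e2]
    ring
  have hTT' : ((T' : ℕ) : ZMod b) - ((T : ℕ) : ZMod b) = -(Znat : ZMod b) := by
    rw [← hbadsum, Finset.sum_congr rfl hbadterm, Finset.sum_sub_distrib, hT', hT]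
    push_cast
    ring
  -- Znat ≡ c mod b
  have hsumb : ∑ u ∈ Finset.range b, u = c * (2 * c - 1) := by
    have hsum2 := Finset.sum_range_id_mul_two b
    have hb1 : b * (b - 1) = 2 * (c * (2 * c - 1)) := by
      have e1 : b - 1 = 2 * c - 1 := by omega
      rw [e1, hb2, mul_assoc]
    omega
  obtain ⟨a, ha⟩ : Odd (k * m * (2 * c - 1)) := by
    refine (hk.mul hm).mul ⟨c - 1, by omega⟩
  have hZ2 : Znat = a * b + c := by
    have e3 : Znat = c * (k * m * (2 * c - 1)) := by
      rw [hZnat, hsumb]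
      ring
    rw [e3, ha, hb2]
    ring
  have hZc : (Znat : ZMod b) = ((c : ℕ) : ZMod b) := by
    rw [hZ2]
    push_cast
    rw [ZMod.natCast_self]
    ring
  have hmod : (T' + c) ≡ T [MOD b] := by
    rw [← ZMod.natCast_eq_natCast_iff]
    push_cast
    rw [← hZc]
    linear_combination hTT'
  -- compute 2 * T'
  have hfilKbad : ∀ i : Fin n, ¬ ((i : ℕ) < n - m * r) →
      Kbad.filter (fun p => p.1 = i) = K.filter (fun p => p.1 = i) := by
    intro i h
    rw [hKbad, Finset.filter_filter]
    refine Finset.filter_congr fun p hp => ?_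
    constructor
    · rintro ⟨h1, h2⟩; exact h2
    · intro h2; exact ⟨by rw [h2]; exact h, h2⟩
  have hfilKbad0 : ∀ i : Fin n, ((i : ℕ) < n - m * r) →
      Kbad.filter (fun p => p.1 = i) = ∅ := by
    intro i h
    rw [Finset.filter_eq_empty_iff]
    intro p hp
    have := (Finset.mem_filter.mp hp).2
    intro he
    exact this (he ▸ h)
  have hT'fib : ∀ (f : Fin n → ℕ), ∑ p ∈ Kbad, f p.1
      = ∑ i : Fin n, (if ¬ ((i : ℕ) < n - m * r) then k * f i else 0) := by
    intro f
    rw [← Finset.sum_fiberwise_of_maps_to (g := fun p : Fin n × Fin n => p.1)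
      (t := Finset.univ) (fun p _ => Finset.mem_univ p.1) (fun p => f p.1)]
    refine Finset.sum_congr rfl fun i _ => ?_
    by_cases h : (i : ℕ) < n - m * r
    · rw [hfilKbad0 i h, if_neg (by omega)]
      simp
    · rw [if_pos h]
      have he := hfilKbad i h
      calc ∑ p ∈ Kbad.filter (fun p => p.1 = i), f p.1
          = ∑ p ∈ Kbad.filter (fun p => p.1 = i), f i :=
            Finset.sum_congr rfl fun p hp => by rw [(Finset.mem_filter.mp hp).2]
        _ = (Kbad.filter (fun p => p.1 = i)).card * f i := by
            rw [Finset.sum_const, smul_eq_mul]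
        _ = k * f i := by rw [he, hK1 i]
  have hrangeq : (Finset.range n).filter (fun i => ¬ i < n - m * r)
      = (Finset.range (b * m)).filter (fun i => ¬ i < m * (b - r)) := by
    rw [hn', hn]
  have hT'2 : 2 * T' = k * (m * (r * (r + 1))) := by
    have e1 : T' = k * ∑ i ∈ (Finset.range (b * m)).filter (fun i => ¬ i < m * (b - r)),
        (b - i / m) := by
      rw [hT', hT'fib (fun i => b - (i : ℕ) / m), ← hrangeq]
      rw [Finset.mul_sum, Finset.sum_filter,
        ← Fin.sum_univ_eq_sum_range (fun i => if ¬ i < n - m * r then k * (b - i / m) else 0) n]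
    rw [e1, ← Nat.mul_assoc 2 k _, Nat.mul_comm 2 k, Nat.mul_assoc, aux_band b m r m0 hrb]
  -- card of Kbad
  have hKbadcard : Kbad.card = k * (m * r) := by
    have e1 : Kbad.card = ∑ p ∈ Kbad, (fun _ : Fin n => 1) p.1 := by
      rw [Finset.card_eq_sum_ones]
    rw [e1, hT'fib (fun _ => 1)]
    have e2 : ∑ i : Fin n, (if ¬ ((i : ℕ) < n - m * r) then k * 1 else 0)
        = k * ∑ i ∈ (Finset.range n).filter (fun i => ¬ i < n - m * r), 1 := by
      rw [Finset.mul_sum, Finset.sum_filter,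
        ← Fin.sum_univ_eq_sum_range (fun i => if ¬ i < n - m * r then k * 1 else 0) n]
    rw [e2]
    have e3 : (Finset.range n).filter (fun i => ¬ i < n - m * r)
        = Finset.range n \ Finset.range (n - m * r) := by
      ext x
      simp only [Finset.mem_filter, Finset.mem_sdiff, Finset.mem_range]
    rw [Finset.sum_const, smul_eq_mul, mul_one, e3, Finset.card_sdiff_of_subset
      (Finset.range_subset_range.mpr (by omega)), Finset.card_range, Finset.card_range]
    congr 1
    omega
  -- bounds on T
  have hTlb : k * (m * r) ≤ T := by
    have := Finset.card_nsmul_le_sum Kbad t 1 (fun p hp => (ht p (Finset.mem_filter.mp hp).2).1)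
    rw [smul_eq_mul, mul_one, hKbadcard] at this
    exact this
  have hTub : T ≤ k * (m * r) * r := by
    have := Finset.sum_le_card_nsmul Kbad t r (fun p hp => (ht p (Finset.mem_filter.mp hp).2).2.1)
    rw [smul_eq_mul, hKbadcard] at this
    exact this
  -- final contradiction
  have hd1 : (b : ℤ) ∣ (T : ℤ) - ((T' : ℤ) + (c : ℤ)) := by
    have := hmod.dvd
    push_cast at this ⊢
    convert this using 1
  have keyZ : (k : ℤ) * m * r * r - (k : ℤ) * m * r < b := by
    cases r with
    | zero => push_cast; simp; exact_mod_cast hbpos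
    | succ q =>
      have keyq : k * m * (q + 1) * q < b := by
        have : (q + 1) - 1 = q := by omega
        rw [this] at key
        exact key
      have hZq : ((k * m * (q + 1) * q : ℕ) : ℤ) < (b : ℤ) := by exact_mod_cast keyq
      push_cast at hZq ⊢
      nlinarith [hZq]
  have hX0 : (T : ℤ) = (T' : ℤ) := by
    have hd2 : (b : ℤ) ∣ 2 * ((T : ℤ) - ((T' : ℤ) + (c : ℤ))) := hd1.mul_left 2
    have e2T' : (2 * (T' : ℤ)) = (k : ℤ) * (m * (r * (r + 1))) := by exact_mod_cast hT'2
    have hbZ : (2 : ℤ) * c = b := by rw [hb2]; push_cast; ring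
    have hd3 : (b : ℤ) ∣ 2 * (T : ℤ) - 2 * (T' : ℤ) := by
      have : 2 * ((T : ℤ) - ((T' : ℤ) + (c : ℤ))) = (2 * (T : ℤ) - 2 * (T' : ℤ)) - b := by
        rw [← hbZ]; ring
      have h4 := hd2
      rw [this] at h4
      have := dvd_add h4 (dvd_refl (b : ℤ))
      simpa using this
    have hTlbZ : (k : ℤ) * (m * r) ≤ (T : ℤ) := by exact_mod_cast hTlb
    have hTubZ : (T : ℤ) ≤ (k : ℤ) * (m * r) * r := by exact_mod_cast hTub
    rcases hd3 with ⟨e, he⟩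
    have hbZ0 : (0 : ℤ) < b := by exact_mod_cast hbpos
    have hexp : (k : ℤ) * (m * (r * (r + 1))) = k * m * r * r + k * m * r := by ring
    have hexp2 : (k : ℤ) * (m * r) * r = k * m * r * r := by ring
    have hexp3 : (k : ℤ) * (m * r) = k * m * r := by ring
    have hbe1 : (b : ℤ) * e < b := by linarith [he, e2T', hTubZ, keyZ, hexp, hexp2]
    have hbe2 : -(b : ℤ) < b * e := by linarith [he, e2T', hTlbZ, keyZ, hexp, hexp3]
    have he0 : e = 0 := by
      have h6 : e < 1 := by nlinarith [hbe1, hbZ0]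
      have h7 : -1 < e := by nlinarith [hbe2, hbZ0]
      omega
    rw [he0, mul_zero] at he
    linarith [he]
  have hdc : (b : ℤ) ∣ (c : ℤ) := by
    have h5 : (T : ℤ) - ((T' : ℤ) + (c : ℤ)) = -(c : ℤ) := by rw [hX0]; ring
    rw [h5] at hd1
    exact (dvd_neg.mp hd1)
  have : b ∣ c := by exact_mod_cast hdc
  have := Nat.le_of_dvd hc0 this
  omega
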